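/- Suppose A satisfies AᵀP + PA + 2λP ≤ −εI with ε > 0 and P symmetric invertible with p negative eigenvalues. Then A + λI has exactly p eigenvalues (counted with algebraic multiplicity) with positive real part and n−p with negative real part. -/

import Mathlib

open Matrix Polynomial Module Filter


section InertiaAux

variable {m : Type*} [Fintype m] [DecidableEq m]

/-- Evaluation of the characteristic polynomial is the determinant. -/
lemma charpoly_eval_eq_det {R : Type*} [CommRing R] (M : Matrix m m R) (μ : R) :
    M.charpoly.eval μ = (μ • (1 : Matrix m m R) - M).det := by
  have h : M.charpoly.eval μ = ((Polynomial.evalRingHom μ).mapMatrix (charmatrix M)).det := by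
    rw [Matrix.charpoly, ← RingHom.map_det]; rfl
  rw [h]
  congr 1
  ext i j
  by_cases hij : i = j
  · subst hij
    simp [charmatrix_apply_eq, Matrix.smul_apply, Matrix.one_apply_eq]
  · simp [charmatrix_apply_ne _ _ _ hij, Matrix.smul_apply, Matrix.one_apply_ne hij]

/-- Characteristic polynomial of a shifted matrix. -/
lemma charpoly_shift {R : Type*} [CommRing R] (M : Matrix m m R) (μ : R) :
    (M - μ • 1).charpoly = M.charpoly.comp (X + C μ) := by
  have h : M.charpoly.comp (X + C μ)
      = ((Polynomial.eval₂RingHom Polynomial.C (X + C μ)).mapMatrix (charmatrix M)).det := by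
    rw [Matrix.charpoly, ← RingHom.map_det]; rfl
  rw [h, Matrix.charpoly]
  congr 1
  ext i j
  by_cases hij : i = j
  · subst hij
    simp [charmatrix_apply_eq, Matrix.sub_apply, Matrix.smul_apply, Matrix.one_apply_eq]
    ring
  · simp [charmatrix_apply_ne _ _ _ hij, Matrix.sub_apply, Matrix.smul_apply,
      Matrix.one_apply_ne hij]

lemma charpoly_toLinAlgEquiv' {K : Type*} [Field K] (N : Matrix m m K) :
    (Matrix.toLinAlgEquiv' N).charpoly = N.charpoly := by
  have h1 : (Matrix.toLinAlgEquiv' N : (m → K) →ₗ[K] (m → K)) = Matrix.toLin' N := rfl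
  rw [← LinearMap.charpoly_toMatrix (Matrix.toLinAlgEquiv' N : (m → K) →ₗ[K] (m → K))
      (Pi.basisFun K m), LinearMap.toMatrix_eq_toMatrix', h1, LinearMap.toMatrix'_toLin']

lemma finrank_maxGenEigenspace_eq_rootMultiplicity {K : Type*} [Field K]
    (N : Matrix m m K) (μ : K) :
    finrank K (Module.End.maxGenEigenspace (Matrix.toLinAlgEquiv' N) μ)
      = N.charpoly.rootMultiplicity μ := by
  have h1 : Module.End.maxGenEigenspace (Matrix.toLinAlgEquiv' N) μ
      = Module.End.maxGenEigenspace (Matrix.toLinAlgEquiv' (N - μ • 1)) 0 := by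
    ext x
    simp only [Module.End.mem_maxGenEigenspace]
    have h2 : Matrix.toLinAlgEquiv' (N - μ • 1) - (0 : K) • 1
        = Matrix.toLinAlgEquiv' N - μ • 1 := by
      simp [map_sub, _root_.map_smul]
    rw [h2]
  rw [h1, LinearMap.finrank_maxGenEigenspace_zero_eq, charpoly_toLinAlgEquiv',
    Polynomial.rootMultiplicity_eq_natTrailingDegree, charpoly_shift]

lemma finrank_biSup_of_iSupIndep {K V : Type*} [Field K] [AddCommGroup V] [Module K V]
    [FiniteDimensional K V] (E : K → Submodule K V) (hE : iSupIndep E) (s : Finset K) :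
    finrank K (⨆ μ ∈ s, E μ : Submodule K V) = ∑ μ ∈ s, finrank K (E μ) := by
  classical
  induction s using Finset.induction with
  | empty => simp
  | @insert a s ha ih =>
    rw [Finset.sum_insert ha, ← ih]
    have hsup : (⨆ μ ∈ insert a s, E μ : Submodule K V) = E a ⊔ ⨆ μ ∈ s, E μ :=
      Finset.iSup_insert _ _ _
    have hdisj : Disjoint (E a) (⨆ μ ∈ s, E μ) := by
      refine (hE a).mono_right ?_
      refine iSup₂_le fun μ hμ => ?_
      exact le_iSup₂_of_le μ (by rintro rfl; exact ha hμ) le_rfl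
    have hadd := Submodule.finrank_sup_add_finrank_inf_eq (E a) (⨆ μ ∈ s, E μ)
    rw [hdisj.eq_bot] at hadd
    simp only [finrank_bot, add_zero] at hadd
    rw [hsup, hadd]

lemma countP_roots_eq_finrank {K : Type*} [Field K] [DecidableEq K] (N : Matrix m m K)
    (pr : K → Prop) [DecidablePred pr] :
    N.charpoly.roots.countP pr
      = finrank K (⨆ μ ∈ N.charpoly.roots.toFinset.filter pr,
          Module.End.maxGenEigenspace (Matrix.toLinAlgEquiv' N) μ : Submodule K (m → K)) := by
  classical
  rw [finrank_biSup_of_iSupIndep _ (Module.End.independent_maxGenEigenspace _)]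
  rw [Multiset.countP_eq_card_filter,
    ← Multiset.toFinset_sum_count_eq (Multiset.filter pr N.charpoly.roots)]
  rw [Multiset.toFinset_filter]
  refine Finset.sum_congr rfl fun μ hμ => ?_
  have hpr : pr μ := (Finset.mem_filter.mp hμ).2
  rw [Multiset.count_filter, if_pos hpr, Polynomial.count_roots,
    finrank_maxGenEigenspace_eq_rootMultiplicity]

end InertiaAux


section InertiaAux2

variable {n : ℕ}

/-- Real part of a complexified real quadratic form. -/
lemma re_star_dot_map (C : Matrix (Fin n) (Fin n) ℝ) (x : Fin n → ℂ) :
    (star x ⬝ᵥ (C.map Complex.ofReal) *ᵥ x).re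
      = (fun i => (x i).re) ⬝ᵥ C *ᵥ (fun i => (x i).re)
        + (fun i => (x i).im) ⬝ᵥ C *ᵥ (fun i => (x i).im) := by
  simp only [dotProduct, mulVec, Pi.star_apply, Matrix.map_apply]
  rw [Complex.re_sum, ← Finset.sum_add_distrib]
  refine Finset.sum_congr rfl fun i _ => ?_
  rw [Finset.mul_sum, Complex.re_sum, Finset.mul_sum, Finset.mul_sum, ← Finset.sum_add_distrib]
  refine Finset.sum_congr rfl fun j _ => ?_
  simp only [RCLike.star_def, Complex.mul_re, Complex.mul_im, Complex.conj_re, Complex.conj_im,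
    Complex.ofReal_re, Complex.ofReal_im]
  ring

lemma star_dot_self_eq (y : Fin n → ℂ) :
    (star y ⬝ᵥ y).re = ∑ i, Complex.normSq (y i) := by
  simp only [dotProduct, Pi.star_apply]
  rw [Complex.re_sum]
  refine Finset.sum_congr rfl fun i _ => ?_
  simp [RCLike.star_def, Complex.mul_re, Complex.conj_re, Complex.conj_im, Complex.normSq_apply]

lemma star_dot_self_nonneg (y : Fin n → ℂ) : 0 ≤ (star y ⬝ᵥ y).re := by
  rw [star_dot_self_eq]
  exact Finset.sum_nonneg fun i _ => Complex.normSq_nonneg _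

/-- Conjugation of a sesquilinear form by a matrix. -/
lemma star_mulVec_dot (H N : Matrix (Fin n) (Fin n) ℂ) (y : Fin n → ℂ) :
    star (N *ᵥ y) ⬝ᵥ H *ᵥ (N *ᵥ y) = star y ⬝ᵥ (Nᴴ * H * N) *ᵥ y := by
  rw [star_mulVec, dotProduct_mulVec, dotProduct_mulVec, dotProduct_mulVec,
    vecMul_vecMul, vecMul_vecMul, Matrix.mul_assoc]

/-- Geometric bound for powers applied to generalized eigenvectors. -/
lemma pow_mulVec_bound (T : Matrix (Fin n) (Fin n) ℂ) (ν : ℂ) {ρ : ℝ} (hνρ : ‖ν‖ < ρ)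
    (m : ℕ) : ∀ x : Fin n → ℂ, ((T - ν • 1) ^ m) *ᵥ x = 0 →
    ∃ C : ℝ, 0 ≤ C ∧ ∀ k, ‖(T ^ k) *ᵥ x‖ ≤ C * ρ ^ k := by
  have hρν : 0 < ρ - ‖ν‖ := sub_pos.2 hνρ
  have hρ0 : 0 < ρ := lt_of_le_of_lt (norm_nonneg ν) hνρ
  induction m with
  | zero =>
    intro x hx
    rw [pow_zero, one_mulVec] at hx
    exact ⟨0, le_rfl, fun k => by simp [hx, mulVec_zero]⟩
  | succ m ih =>
    intro x hx
    obtain ⟨Cy, hCy0, hCy⟩ := ih ((T - ν • 1) *ᵥ x)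
      (by rw [mulVec_mulVec, ← pow_succ]; exact hx)
    set C : ℝ := ‖x‖ + Cy / (ρ - ‖ν‖) with hC
    have hC0 : 0 ≤ C := by positivity
    refine ⟨C, hC0, ?_⟩
    have hkey : ‖ν‖ * C + Cy ≤ C * ρ := by
      have h1 : C * (ρ - ‖ν‖) = ‖x‖ * (ρ - ‖ν‖) + Cy := by
        rw [hC, add_mul, div_mul_cancel₀ _ (ne_of_gt hρν)]
      nlinarith [norm_nonneg x]
    intro k
    induction k with
    | zero =>
      simp only [pow_zero, one_mulVec, mul_one]
      have h6 : 0 ≤ Cy / (ρ - ‖ν‖) := by positivity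
      rw [hC]
      linarith
    | succ k ihk =>
      have hrec : (T ^ (k+1)) *ᵥ x = ν • ((T ^ k) *ᵥ x) + (T ^ k) *ᵥ ((T - ν • 1) *ᵥ x) := by
        rw [mulVec_mulVec, Matrix.mul_sub, mul_smul_comm, mul_one, sub_mulVec,
          smul_mulVec, ← pow_succ]
        abel
      rw [hrec]
      have h2 : ‖ν • ((T ^ k) *ᵥ x) + (T ^ k) *ᵥ ((T - ν • 1) *ᵥ x)‖
          ≤ ‖ν‖ * ‖(T ^ k) *ᵥ x‖ + ‖(T ^ k) *ᵥ ((T - ν • 1) *ᵥ x)‖ := by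
        refine le_trans (norm_add_le _ _) ?_
        rw [norm_smul]
      refine le_trans h2 ?_
      have h3 : ‖ν‖ * ‖(T ^ k) *ᵥ x‖ ≤ ‖ν‖ * (C * ρ ^ k) :=
        mul_le_mul_of_nonneg_left ihk (norm_nonneg ν)
      have h4 := hCy k
      have h5 : (0:ℝ) < ρ ^ k := pow_pos hρ0 k
      rw [pow_succ]
      nlinarith [h3, h4, h5, hkey]

lemma tendsto_pow_mulVec (T : Matrix (Fin n) (Fin n) ℂ) (ν : ℂ) (hν : ‖ν‖ < 1)
    (m : ℕ) (x : Fin n → ℂ) (hx : ((T - ν • 1) ^ m) *ᵥ x = 0) :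
    Tendsto (fun k => (T ^ k) *ᵥ x) atTop (nhds 0) := by
  set ρ : ℝ := (1 + ‖ν‖) / 2 with hρ
  have hν0 : 0 ≤ ‖ν‖ := norm_nonneg _
  have hνρ : ‖ν‖ < ρ := by rw [hρ]; linarith
  have hρ1 : ρ < 1 := by rw [hρ]; linarith
  have hρ0 : 0 ≤ ρ := by positivity
  obtain ⟨C, hC0, hC⟩ := pow_mulVec_bound T ν hνρ m x hx
  refine squeeze_zero_norm hC ?_
  have := (tendsto_pow_atTop_nhds_zero_of_lt_one hρ0 hρ1).const_mul C
  simpa using this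

end InertiaAux2


section InertiaCore

variable {n : ℕ}


lemma core (Mc Hc : Matrix (Fin n) (Fin n) ℂ) (ε : ℝ) (hε : 0 < ε)
    (hQ : ∀ x : Fin n → ℂ, (star x ⬝ᵥ (Mcᴴ * Hc + Hc * Mc) *ᵥ x).re ≤ -ε * (star x ⬝ᵥ x).re)
    (c : ℝ) (hc : c ≠ 0) (hdet : IsUnit (Mc + (c : ℂ) • 1).det) :
    ∀ x ∈ (⨆ μ ∈ (Mc.charpoly.roots.toFinset.filter fun μ => 0 < c * μ.re),
        Module.End.maxGenEigenspace (Matrix.toLinAlgEquiv' Mc) μ : Submodule ℂ (Fin n → ℂ)),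
      c * (star x ⬝ᵥ Hc *ᵥ x).re ≤ 0 := by
  classical
  set N : Matrix (Fin n) (Fin n) ℂ := Mc + (c : ℂ) • 1 with hN
  set D : Matrix (Fin n) (Fin n) ℂ := Mc - (c : ℂ) • 1 with hD
  set T : Matrix (Fin n) (Fin n) ℂ := D * N⁻¹ with hT
  have hNinv : N * N⁻¹ = 1 := Matrix.mul_nonsing_inv _ hdet
  have hinvN : N⁻¹ * N = 1 := Matrix.nonsing_inv_mul _ hdet
  set q : (Fin n → ℂ) → ℝ := fun x => (star x ⬝ᵥ Hc *ᵥ x).re with hq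
  have hDH : Dᴴ = Mcᴴ - (c : ℂ) • 1 := by
    rw [hD, conjTranspose_sub, conjTranspose_smul, conjTranspose_one]
    norm_num [Complex.star_def, Complex.conj_ofReal]
  have hNH : Nᴴ = Mcᴴ + (c : ℂ) • 1 := by
    rw [hN, conjTranspose_add, conjTranspose_smul, conjTranspose_one]
    norm_num [Complex.star_def, Complex.conj_ofReal]
  have hkeyM : Dᴴ * Hc * D - Nᴴ * Hc * N
      = ((-(2 * c) : ℝ) : ℂ) • (Mcᴴ * Hc + Hc * Mc) := by
    rw [hDH, hNH, hD, hN]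
    push_cast
    simp only [sub_mul, mul_sub, add_mul, mul_add, smul_mul_assoc, mul_smul_comm,
      one_mul, mul_one, smul_smul]
    module
  have hmono : ∀ x : Fin n → ℂ, c * q x ≤ c * q (T *ᵥ x) := by
    intro x
    set y : Fin n → ℂ := N⁻¹ *ᵥ x with hy
    have hxy : N *ᵥ y = x := by rw [hy, mulVec_mulVec, hNinv, one_mulVec]
    have hTx : T *ᵥ x = D *ᵥ y := by rw [hy, mulVec_mulVec, hT]
    have e1 : q (T *ᵥ x) = (star y ⬝ᵥ (Dᴴ * Hc * D) *ᵥ y).re := by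
      rw [hq]; simp only []
      rw [hTx, star_mulVec_dot]
    have e2 : q x = (star y ⬝ᵥ (Nᴴ * Hc * N) *ᵥ y).re := by
      rw [hq]; simp only []
      rw [← hxy, star_mulVec_dot]
    have e3 : q (T *ᵥ x) - q x = -(2 * c) * (star y ⬝ᵥ (Mcᴴ * Hc + Hc * Mc) *ᵥ y).re := by
      rw [e1, e2, ← Complex.sub_re, ← dotProduct_sub, ← Matrix.sub_mulVec, hkeyM,
        smul_mulVec, dotProduct_smul, smul_eq_mul, Complex.re_ofReal_mul]
    have h5 := hQ y
    have h6 := star_dot_self_nonneg y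
    have hR : (star y ⬝ᵥ (Mcᴴ * Hc + Hc * Mc) *ᵥ y).re ≤ 0 := by nlinarith
    have hfin : 0 ≤ c * (q (T *ᵥ x) - q x) := by
      rw [e3]
      nlinarith [mul_nonneg (sq_nonneg c) (neg_nonneg.2 hR)]
    linarith
  have hiter : ∀ (k : ℕ) (x : Fin n → ℂ), c * q x ≤ c * q ((T ^ k) *ᵥ x) := by
    intro k
    induction k with
    | zero => intro x; rw [pow_zero, one_mulVec]
    | succ k ih =>
      intro x
      refine le_trans (ih x) ?_
      have h17 := hmono ((T ^ k) *ᵥ x)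
      rw [mulVec_mulVec, ← pow_succ'] at h17
      exact h17
  have hqcont : Continuous q := by
    refine Complex.continuous_re.comp ?_
    show Continuous fun x : Fin n → ℂ => ∑ i, star (x i) * ∑ j, Hc i j * x j
    refine continuous_finset_sum _ fun i _ => Continuous.mul ?_ ?_
    · exact continuous_star.comp (continuous_apply i)
    · exact continuous_finset_sum _ fun j _ => continuous_const.mul (continuous_apply j)
  have hq0 : q 0 = 0 := by simp [hq]
  set Z : Submodule ℂ (Fin n → ℂ) :=
    { carrier := {x | Tendsto (fun k => (T ^ k) *ᵥ x) atTop (nhds 0)}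
      add_mem' := fun {a b} ha hb => by
        have h18 := ha.add hb
        simpa [mulVec_add] using h18
      zero_mem' := by
        simpa [mulVec_zero] using (tendsto_const_nhds :
          Tendsto (fun _ : ℕ => (0 : Fin n → ℂ)) atTop (nhds 0))
      smul_mem' := fun r {x} h => by
        have h19 := h.const_smul r
        simpa [mulVec_smul] using h19 } with hZ
  intro x hx
  have hxZ : x ∈ Z := by
    refine (iSup₂_le fun μ hμ => ?_ : _ ≤ Z) hx
    obtain ⟨hroot, hpr⟩ := Finset.mem_filter.mp hμ
    intro v hv
    obtain ⟨m, hm⟩ := (Module.End.mem_maxGenEigenspace _ _ _).mp hv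
    have hmv : ((Mc - μ • 1) ^ m) *ᵥ v = 0 := by
      have h7 : Matrix.toLinAlgEquiv' ((Mc - μ • 1) ^ m)
          = (Matrix.toLinAlgEquiv' Mc - μ • 1) ^ m := by
        rw [map_pow, map_sub, _root_.map_smul, _root_.map_one]
      have h8 : ((Mc - μ • 1) ^ m) *ᵥ v
          = (Matrix.toLinAlgEquiv' ((Mc - μ • 1) ^ m)) v := rfl
      rw [h8, h7, hm]
    have hμc : μ + (c : ℂ) ≠ 0 := by
      intro h
      have hμeq : μ = -(c : ℂ) := by linear_combination h
      have h20 : μ.re = -c := by rw [hμeq]; simp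
      rw [h20] at hpr
      nlinarith [sq_nonneg c]
    set ν : ℂ := (μ - c) / (μ + c) with hν
    set s : ℂ := (2 * c) / (μ + c) with hs
    have hnormlt : ‖ν‖ < 1 := by
      have h8 : Complex.normSq (μ - c) < Complex.normSq (μ + c) := by
        simp only [Complex.normSq_apply, Complex.sub_re, Complex.add_re, Complex.sub_im,
          Complex.add_im, Complex.ofReal_re, Complex.ofReal_im]
        nlinarith
      have e1 := Complex.sq_norm (μ - (c : ℂ))
      have e2 := Complex.sq_norm (μ + (c : ℂ))
      have h9 : ‖μ - (c : ℂ)‖ < ‖μ + (c : ℂ)‖ := by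
        nlinarith [norm_nonneg (μ - (c : ℂ)), norm_nonneg (μ + (c : ℂ))]
      have hpos : 0 < ‖μ + (c : ℂ)‖ := norm_pos_iff.mpr hμc
      rw [hν, norm_div, div_lt_one hpos]
      exact h9
    have h10 : (D - ν • N) * N⁻¹ = T - ν • 1 := by
      rw [sub_mul, smul_mul_assoc, hNinv, hT]
    have hν1 : 1 - ν = s := by
      rw [hν, hs]; field_simp; ring
    have hν2 : (c : ℂ) + ν * c = s * μ := by
      rw [hν, hs]; field_simp; ring
    have h11 : D - ν • N = s • (Mc - μ • 1) := by
      rw [hD, hN]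
      have h12 : Mc - (c : ℂ) • 1 - ν • (Mc + (c : ℂ) • 1)
          = (1 - ν) • Mc - ((c : ℂ) + ν * c) • 1 := by module
      rw [h12, hν1, hν2]
      module
    have hNE : N * (Mc - μ • 1) = (Mc - μ • 1) * N := by
      rw [hN]
      simp only [add_mul, mul_add, sub_mul, mul_sub, smul_mul_assoc, mul_smul_comm,
        one_mul, mul_one]
      module
    letI := N.invertibleOfIsUnitDet hdet
    have hcomm : Commute (N⁻¹) (Mc - μ • 1) := by
      have hcN : Commute (Mc - μ • 1) N := hNE.symm
      have h14 : Commute (Mc - μ • 1) (⅟N) := hcN.invOf_right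
      rw [Matrix.invOf_eq_nonsing_inv] at h14
      exact h14.symm
    have hcom : (Mc - μ • 1) * N⁻¹ = N⁻¹ * (Mc - μ • 1) := hcomm.symm
    have hTpow : ((T - ν • 1) ^ m) *ᵥ v = 0 := by
      have h15 : T - ν • 1 = s • (N⁻¹ * (Mc - μ • 1)) := by
        rw [← h10, h11, smul_mul_assoc, hcom]
      rw [h15, _root_.smul_pow, hcomm.mul_pow, smul_mulVec, ← mulVec_mulVec, hmv,
        mulVec_zero, smul_zero]
    exact tendsto_pow_mulVec T ν hnormlt m v hTpow
  have hxt : Tendsto (fun k => (T ^ k) *ᵥ x) atTop (nhds 0) := hxZ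
  have hlim : Tendsto (fun k => c * q ((T ^ k) *ᵥ x)) atTop (nhds 0) := by
    have h16 : Tendsto (fun k => q ((T ^ k) *ᵥ x)) atTop (nhds (q 0)) :=
      (hqcont.tendsto 0).comp hxt
    rw [hq0] at h16
    simpa using h16.const_mul c
  exact ge_of_tendsto' hlim (fun k => hiter k x)

end InertiaCore


section InertiaSpec

variable {n : ℕ}


lemma finrank_le_card_sign (P : Matrix (Fin n) (Fin n) ℝ) (hP : P.IsHermitian)
    (hnz : ∀ i, hP.eigenvalues i ≠ 0) (s : ℝ) (hs : s ≠ 0)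
    (W : Submodule ℂ (Fin n → ℂ))
    (hW : ∀ x ∈ W, s * (star x ⬝ᵥ (P.map Complex.ofReal) *ᵥ x).re ≤ 0) :
    finrank ℂ W ≤ (Finset.univ.filter fun i => s * hP.eigenvalues i < 0).card := by
  classical
  set lam := hP.eigenvalues with hlam
  set U : Matrix (Fin n) (Fin n) ℝ := (hP.eigenvectorUnitary : Matrix (Fin n) (Fin n) ℝ)
    with hU
  set Uc : Matrix (Fin n) (Fin n) ℂ := U.map Complex.ofReal with hUc
  have hstar : ∀ (R : Matrix (Fin n) (Fin n) ℝ),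
      (star R).map Complex.ofReal = (R.map Complex.ofReal)ᴴ := by
    intro R
    rw [Matrix.star_eq_conjTranspose]
    exact Matrix.conjTranspose_map Complex.ofReal (fun r => (Complex.conj_ofReal r).symm)
  have hmul : ∀ (R S : Matrix (Fin n) (Fin n) ℝ),
      (R * S).map Complex.ofReal = R.map Complex.ofReal * S.map Complex.ofReal :=
    fun R S => Matrix.map_mul (f := Complex.ofRealHom)
  have hU2 : U * star U = 1 := hP.eigenvectorUnitary.prop.2
  have hU1 : star U * U = 1 := hP.eigenvectorUnitary.prop.1
  have hUc2 : Uc * Ucᴴ = 1 := by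
    rw [hUc, ← hstar, ← hmul, hU2]
    exact Matrix.map_one _ Complex.ofReal_zero Complex.ofReal_one
  have hUc1 : Ucᴴ * Uc = 1 := by
    rw [hUc, ← hstar, ← hmul, hU1]
    exact Matrix.map_one _ Complex.ofReal_zero Complex.ofReal_one
  have hspec : P.map Complex.ofReal
      = Uc * (Matrix.diagonal fun i => ((lam i : ℝ) : ℂ)) * Ucᴴ := by
    have h0 := hP.spectral_theorem
    have h1 : P = U * Matrix.diagonal lam * star U := by
      exact h0
    calc P.map Complex.ofReal
        = (U * Matrix.diagonal lam * star U).map Complex.ofReal := by rw [← h1]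
      _ = Uc * (Matrix.diagonal lam).map Complex.ofReal * (star U).map Complex.ofReal := by
          rw [hmul, hmul]
      _ = Uc * (Matrix.diagonal fun i => ((lam i : ℝ) : ℂ)) * Ucᴴ := by
          rw [hstar, Matrix.diagonal_map Complex.ofReal_zero]
  -- quadratic form in eigencoordinates
  have hqeq : ∀ x : Fin n → ℂ, (star x ⬝ᵥ (P.map Complex.ofReal) *ᵥ x).re
      = ∑ i, lam i * Complex.normSq ((Ucᴴ *ᵥ x) i) := by
    intro x
    have h2 : star (Ucᴴ *ᵥ x) ⬝ᵥ (Matrix.diagonal fun i => ((lam i : ℝ) : ℂ)) *ᵥ (Ucᴴ *ᵥ x)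
        = star x ⬝ᵥ (P.map Complex.ofReal) *ᵥ x := by
      rw [star_mulVec_dot, conjTranspose_conjTranspose, hspec]
    rw [← h2]
    set y : Fin n → ℂ := Ucᴴ *ᵥ x with hy
    simp only [dotProduct, Pi.star_apply, mulVec_diagonal]
    rw [Complex.re_sum]
    refine Finset.sum_congr rfl fun i _ => ?_
    simp [RCLike.star_def, Complex.mul_re, Complex.conj_re, Complex.conj_im,
      Complex.normSq_apply, Complex.ofReal_re, Complex.ofReal_im]
    ring
  -- the injection
  set L : (Fin n → ℂ) →ₗ[ℂ] ({i : Fin n // s * lam i < 0} → ℂ) :=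
    (LinearMap.funLeft ℂ ℂ (Subtype.val)).comp (Matrix.mulVecLin (Ucᴴ)) with hL
  have hinj : ∀ x ∈ W, L x = 0 → x = 0 := by
    intro x hxW hLx
    have hy0 : ∀ i : Fin n, s * lam i < 0 → (Ucᴴ *ᵥ x) i = 0 := by
      intro i hi
      have := congrFun hLx ⟨i, hi⟩
      simpa [hL, LinearMap.funLeft] using this
    have hsum : ∑ i, s * lam i * Complex.normSq ((Ucᴴ *ᵥ x) i) ≤ 0 := by
      have h3 := hW x hxW
      rw [hqeq x, Finset.mul_sum] at h3
      convert h3 using 2 with i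
      ring
    have hterm : ∀ i ∈ Finset.univ, (0:ℝ) ≤ s * lam i * Complex.normSq ((Ucᴴ *ᵥ x) i) := by
      intro i _
      rcases lt_or_ge (s * lam i) 0 with h | h
      · rw [hy0 i h]; simp
      · exact mul_nonneg h (Complex.normSq_nonneg _)
    have hzero : ∀ i ∈ Finset.univ, s * lam i * Complex.normSq ((Ucᴴ *ᵥ x) i) = 0 := by
      rw [← Finset.sum_eq_zero_iff_of_nonneg hterm]
      exact le_antisymm hsum (Finset.sum_nonneg hterm)
    have hyall : (Ucᴴ *ᵥ x) = 0 := by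
      funext i
      rcases lt_or_ge (s * lam i) 0 with h | h
      · exact hy0 i h
      · have h4 := hzero i (Finset.mem_univ i)
        have h5 : s * lam i ≠ 0 := mul_ne_zero hs (hnz i)
        have h6 : Complex.normSq ((Ucᴴ *ᵥ x) i) = 0 := by
          rcases mul_eq_zero.mp h4 with h7 | h7
          · exact absurd h7 h5
          · exact h7
        exact Complex.normSq_eq_zero.mp h6
    have h8 : x = Uc *ᵥ (Ucᴴ *ᵥ x) := by
      rw [mulVec_mulVec, hUc2, one_mulVec]
    rw [h8, hyall, mulVec_zero]
  -- dimension count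
  have hinj2 : Function.Injective (L.comp W.subtype) := by
    rw [← LinearMap.ker_eq_bot]
    refine (Submodule.eq_bot_iff _).mpr fun w hw => ?_
    have h9 : L (W.subtype w) = 0 := hw
    have h10 := hinj (W.subtype w) w.2 h9
    exact Subtype.ext h10
  have h11 := LinearMap.finrank_le_finrank_of_injective hinj2
  rw [Module.finrank_pi ℂ] at h11
  rwa [Fintype.card_subtype] at h11

end InertiaSpec




/-- Main inertia theorem for p-dominance: if `AᵀP + PA + 2λP ≤ -εI` with `ε > 0` and
`P` symmetric invertible with `p` negative and `n - p` positive eigenvalues, then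
`A + λI` has exactly `p` eigenvalues (with algebraic multiplicity) with positive real
part and `n - p` with negative real part. -/
theorem inertia_of_shifted_matrix
    {n p : ℕ} (A P : Matrix (Fin n) (Fin n) ℝ) (hP : P.IsHermitian)
    (hneg : (Finset.univ.filter fun i => hP.eigenvalues i < 0).card = p)
    (hpos : (Finset.univ.filter fun i => 0 < hP.eigenvalues i).card = n - p)
    (lam ε : ℝ) (hlam : 0 ≤ lam) (hε : 0 < ε)
    (hLMI : ∀ x : Fin n → ℝ,
      x ⬝ᵥ (Aᵀ * P + P * A + (2 * lam) • P).mulVec x ≤ -ε * (x ⬝ᵥ x)) :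
    (((A + lam • 1).charpoly.aroots ℂ).countP fun μ => 0 < μ.re) = p ∧
    (((A + lam • 1).charpoly.aroots ℂ).countP fun μ => μ.re < 0) = n - p := by
  classical
  set M : Matrix (Fin n) (Fin n) ℝ := A + lam • 1 with hM
  set Mc : Matrix (Fin n) (Fin n) ℂ := M.map Complex.ofReal with hMc
  set Hc : Matrix (Fin n) (Fin n) ℂ := P.map Complex.ofReal with hHc
  -- basic counting facts about eigenvalues of P
  have hpn : p ≤ n := by
    rw [← hneg]
    calc (Finset.univ.filter fun i => hP.eigenvalues i < 0).card
        ≤ Finset.univ.card := Finset.card_filter_le _ _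
      _ = n := by simp
  have hdisjPN : Disjoint (Finset.univ.filter fun i => hP.eigenvalues i < 0)
      (Finset.univ.filter fun i => 0 < hP.eigenvalues i) := by
    refine Finset.disjoint_left.mpr fun i h1 h2 => ?_
    have := (Finset.mem_filter.mp h1).2
    have := (Finset.mem_filter.mp h2).2
    linarith
  have huniv : (Finset.univ.filter fun i => hP.eigenvalues i < 0)
      ∪ (Finset.univ.filter fun i => 0 < hP.eigenvalues i) = Finset.univ := by
    apply Finset.eq_univ_of_card
    rw [Finset.card_union_of_disjoint hdisjPN, hneg, hpos]
    simp [Nat.add_sub_cancel' hpn]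
  have hnz : ∀ i, hP.eigenvalues i ≠ 0 := by
    intro i
    have hi : i ∈ (Finset.univ.filter fun i => hP.eigenvalues i < 0)
        ∪ (Finset.univ.filter fun i => 0 < hP.eigenvalues i) := by
      rw [huniv]; exact Finset.mem_univ i
    rcases Finset.mem_union.mp hi with h | h
    · exact ne_of_lt (Finset.mem_filter.mp h).2
    · exact ne_of_gt (Finset.mem_filter.mp h).2
  -- roots over ℂ
  have haroots : M.charpoly.aroots ℂ = Mc.charpoly.roots := by
    rw [aroots_def, hMc, show (Complex.ofReal : ℝ → ℂ) = ⇑(algebraMap ℝ ℂ) from rfl,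
      Matrix.charpoly_map]
  -- the complexified LMI
  have htrans : ∀ (R : Matrix (Fin n) (Fin n) ℝ), Rᴴ = Rᵀ := fun R => by
    ext i j; simp [Matrix.conjTranspose_apply, Matrix.transpose_apply]
  have hstar : ∀ (R : Matrix (Fin n) (Fin n) ℝ),
      (Rᵀ).map Complex.ofReal = (R.map Complex.ofReal)ᴴ := by
    intro R
    rw [← htrans]
    exact Matrix.conjTranspose_map Complex.ofReal (fun r => (Complex.conj_ofReal r).symm)
  have hmul : ∀ (R S : Matrix (Fin n) (Fin n) ℝ),
      (R * S).map Complex.ofReal = R.map Complex.ofReal * S.map Complex.ofReal :=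
    fun R S => Matrix.map_mul (f := Complex.ofRealHom)
  have hadd : ∀ (R S : Matrix (Fin n) (Fin n) ℝ),
      (R + S).map Complex.ofReal = R.map Complex.ofReal + S.map Complex.ofReal := by
    intro R S; ext i j; simp
  have hMtrans : Mᵀ * P + P * M = Aᵀ * P + P * A + (2 * lam) • P := by
    rw [hM, transpose_add, transpose_smul, transpose_one]
    simp only [add_mul, mul_add, smul_mul_assoc, mul_smul_comm, one_mul, mul_one]
    module
  have hCc : Mcᴴ * Hc + Hc * Mc
      = (Aᵀ * P + P * A + (2 * lam) • P).map Complex.ofReal := by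
    rw [← hMtrans, hadd, hmul, hmul, hMc, hHc, hstar]
  have hQ : ∀ x : Fin n → ℂ,
      (star x ⬝ᵥ (Mcᴴ * Hc + Hc * Mc) *ᵥ x).re ≤ -ε * (star x ⬝ᵥ x).re := by
    intro x
    rw [hCc, re_star_dot_map]
    have h1 := hLMI (fun i => (x i).re)
    have h2 := hLMI (fun i => (x i).im)
    have h3 := re_star_dot_map (1 : Matrix (Fin n) (Fin n) ℝ) x
    rw [Matrix.map_one _ Complex.ofReal_zero Complex.ofReal_one, one_mulVec, one_mulVec,
      one_mulVec] at h3
    rw [h3]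
    unfold Matrix.mulVec at h1 h2 ⊢
    nlinarith [h1, h2]
  -- no purely imaginary roots
  have himag : ∀ μ ∈ Mc.charpoly.roots, μ.re ≠ 0 := by
    intro μ hmem h0
    have hroot : Mc.charpoly.eval μ = 0 := (Polynomial.mem_roots'.mp hmem).2
    rw [charpoly_eval_eq_det] at hroot
    obtain ⟨v, hv0, hv⟩ := Matrix.exists_mulVec_eq_zero_iff.mpr hroot
    have hMv : Mc *ᵥ v = μ • v := by
      rw [sub_mulVec, smul_mulVec, one_mulVec] at hv
      exact (sub_eq_zero.mp hv).symm
    have e1 : star v ⬝ᵥ (Mcᴴ * Hc) *ᵥ v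
        = (starRingEnd ℂ) μ * (star v ⬝ᵥ Hc *ᵥ v) := by
      rw [← mulVec_mulVec, dotProduct_mulVec, ← star_mulVec, hMv, star_smul,
        smul_dotProduct, smul_eq_mul]
      rfl
    have e2 : star v ⬝ᵥ (Hc * Mc) *ᵥ v = μ * (star v ⬝ᵥ Hc *ᵥ v) := by
      rw [← mulVec_mulVec, hMv, mulVec_smul, dotProduct_smul, smul_eq_mul]
    have e3 : star v ⬝ᵥ (Mcᴴ * Hc + Hc * Mc) *ᵥ v
        = (((2 * μ.re : ℝ) : ℂ)) * (star v ⬝ᵥ Hc *ᵥ v) := by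
      rw [add_mulVec, dotProduct_add, e1, e2, ← Complex.add_conj]
      ring
    have e4 : (star v ⬝ᵥ (Mcᴴ * Hc + Hc * Mc) *ᵥ v).re = 0 := by
      rw [e3, h0]
      simp
    have h5 := hQ v
    rw [e4] at h5
    have h6 : 0 < (star v ⬝ᵥ v).re := by
      rw [star_dot_self_eq]
      obtain ⟨i, hi⟩ := Function.ne_iff.mp hv0
      refine Finset.sum_pos' (fun j _ => Complex.normSq_nonneg _) ⟨i, Finset.mem_univ i, ?_⟩
      exact Complex.normSq_pos.mpr hi
    nlinarith
  have hcardroots : Multiset.card Mc.charpoly.roots = n := by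
    rw [(splits_iff_card_roots).mp (IsAlgClosed.splits _),
      Matrix.charpoly_natDegree_eq_dim]
    simp
  -- choice of the Cayley parameter c
  obtain ⟨c, hc0, hcbad⟩ := Set.Infinite.exists_notMem_finset (Set.Ioi_infinite (0:ℝ))
    (Mc.charpoly.roots.toFinset.image Complex.re
      ∪ Mc.charpoly.roots.toFinset.image (fun z => -z.re))
  rw [Set.mem_Ioi] at hc0
  have hdet1 : IsUnit (Mc + (c : ℂ) • 1).det := by
    rw [isUnit_iff_ne_zero]
    intro h
    have h1 : (-(c:ℂ)) • (1 : Matrix (Fin n) (Fin n) ℂ) - Mc = -(Mc + (c:ℂ) • 1) := by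
      module
    have h2 : Mc.charpoly.eval (-(c:ℂ)) = 0 := by
      rw [charpoly_eval_eq_det, h1, Matrix.det_neg, h, mul_zero]
    have h3 : (-(c:ℂ)) ∈ Mc.charpoly.roots :=
      Polynomial.mem_roots'.mpr ⟨(Matrix.charpoly_monic Mc).ne_zero, h2⟩
    apply hcbad
    refine Finset.mem_union_right _ (Finset.mem_image.mpr ⟨-(c:ℂ), Multiset.mem_toFinset.mpr h3, ?_⟩)
    simp
  have hdet2 : IsUnit (Mc + ((-c : ℝ) : ℂ) • 1).det := by
    rw [isUnit_iff_ne_zero]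
    intro h
    have h1 : ((c:ℂ)) • (1 : Matrix (Fin n) (Fin n) ℂ) - Mc = -(Mc + ((-c:ℝ):ℂ) • 1) := by
      push_cast
      module
    have h2 : Mc.charpoly.eval ((c:ℂ)) = 0 := by
      rw [charpoly_eval_eq_det, h1, Matrix.det_neg, h, mul_zero]
    have h3 : ((c:ℂ)) ∈ Mc.charpoly.roots :=
      Polynomial.mem_roots'.mpr ⟨(Matrix.charpoly_monic Mc).ne_zero, h2⟩
    apply hcbad
    refine Finset.mem_union_left _ (Finset.mem_image.mpr ⟨(c:ℂ), Multiset.mem_toFinset.mpr h3, ?_⟩)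
    simp
  -- the two bounds
  have hbound1 : Mc.charpoly.roots.countP (fun μ => 0 < μ.re) ≤ p := by
    have hcong : Mc.charpoly.roots.countP (fun μ => 0 < μ.re)
        = Mc.charpoly.roots.countP (fun μ => 0 < c * μ.re) :=
      Multiset.countP_congr rfl fun μ _ => propext (by
        constructor
        · intro h; exact mul_pos hc0 h
        · intro h; nlinarith)
    rw [hcong, countP_roots_eq_finrank]
    have hb := finrank_le_card_sign P hP hnz c (ne_of_gt hc0) _
      (core Mc Hc ε hε hQ c (ne_of_gt hc0) hdet1)
    refine le_trans hb (le_of_eq ?_)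
    rw [← hneg]
    congr 1
    apply Finset.filter_congr
    intro i _
    constructor
    · intro h; nlinarith
    · intro h; nlinarith
  have hbound2 : Mc.charpoly.roots.countP (fun μ => μ.re < 0) ≤ n - p := by
    have hcong : Mc.charpoly.roots.countP (fun μ => μ.re < 0)
        = Mc.charpoly.roots.countP (fun μ => 0 < (-c) * μ.re) :=
      Multiset.countP_congr rfl fun μ _ => propext (by
        constructor
        · intro h; nlinarith
        · intro h; nlinarith)
    rw [hcong, countP_roots_eq_finrank]
    have hb := finrank_le_card_sign P hP hnz (-c) (by linarith) _
      (core Mc Hc ε hε hQ (-c) (by linarith) (by push_cast at hdet2 ⊢; exact hdet2))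
    refine le_trans hb (le_of_eq ?_)
    rw [← hpos]
    congr 1
    apply Finset.filter_congr
    intro i _
    constructor
    · intro h; nlinarith
    · intro h; nlinarith
  -- total count
  have hsplit : Mc.charpoly.roots.countP (fun μ => 0 < μ.re)
      + Mc.charpoly.roots.countP (fun μ => ¬ 0 < μ.re) = n := by
    rw [Multiset.countP_eq_card_filter, Multiset.countP_eq_card_filter,
      ← Multiset.card_add, Multiset.filter_add_not, hcardroots]
  have hnotpos : Mc.charpoly.roots.countP (fun μ => ¬ 0 < μ.re)
      = Mc.charpoly.roots.countP (fun μ => μ.re < 0) :=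
    Multiset.countP_congr rfl fun μ hμ => propext (by
      have := himag μ hμ
      constructor
      · intro h
        rcases lt_trichotomy μ.re 0 with h1 | h1 | h1
        · exact h1
        · exact absurd h1 this
        · exact absurd h1 h
      · intro h; linarith)
  rw [hnotpos] at hsplit
  have hgoal : (((A + lam • 1).charpoly.aroots ℂ)) = Mc.charpoly.roots := haroots
  rw [hgoal]
  constructor
  · omega
  · omega
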